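/- arXiv:2005.11426 — 4 statements merged into one kernel-verified Lean document; each statement's English description precedes it below -/
import Mathlib

section
/- (Theorem 1) Fix α ∈ (0, 1) with (1 − α)/(1 + α) < √α, and fix fractional offsets i₁, j₁, m₁, n₁, i₂, j₂, m₂, n₂ ∈ [−1/2, 1/2). Then the IoU of the pair of boxes b₁, b₂ defined by the cell parameterization is the same for every choice of the parameters W₀ > 0, H₀ > 0, b_x, b_y ∈ ℝ and cell indices i, j, m, n ∈ ℤ: if (b₁, b₂) is built from (W₀, H₀, b_x, b_y, i, j, m, n) and (b₁′, b₂′) from (W₀′, H₀′, b_x′, b_y′, i′, j′, m′, n′) with the same α and the same fractional offsets, then IoU(b₁, b₂) = IoU(b₁′, b₂′). -/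
/-- Intersection area of two axis-aligned boxes given as (w, h, x, y):
the rectangle [x - w/2, x + w/2] × [y - h/2, y + h/2]. -/
noncomputable def interArea (w₁ h₁ x₁ y₁ w₂ h₂ x₂ y₂ : ℝ) : ℝ :=
  max 0 (min (x₁ + w₁ / 2) (x₂ + w₂ / 2) - max (x₁ - w₁ / 2) (x₂ - w₂ / 2)) *
    max 0 (min (y₁ + h₁ / 2) (y₂ + h₂ / 2) - max (y₁ - h₁ / 2) (y₂ - h₂ / 2))

/-- Intersection over union of two axis-aligned boxes. -/
noncomputable def iou (w₁ h₁ x₁ y₁ w₂ h₂ x₂ y₂ : ℝ) : ℝ :=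
  interArea w₁ h₁ x₁ y₁ w₂ h₂ x₂ y₂ /
    (w₁ * h₁ + w₂ * h₂ - interArea w₁ h₁ x₁ y₁ w₂ h₂ x₂ y₂)
/-- Width (resp. height) of the k-th box in the cell parameterization:
w_k = W₀ / α^(i + i_k), with a real exponent (Real.rpow). -/
noncomputable def cellW (α W₀ : ℝ) (i : ℤ) (ik : ℝ) : ℝ := W₀ / α ^ ((i : ℝ) + ik)

/-- Offset partition spacing δ_i = (W₀ / α^i) · (1 − α)/(1 + α). -/
noncomputable def cellDelta (α W₀ : ℝ) (i : ℤ) : ℝ := W₀ / α ^ i * ((1 - α) / (1 + α))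

/-- Offset of the k-th box in the cell parameterization: x_k = (b_x + m + m_k)·δ_i. -/
noncomputable def cellX (α W₀ bX : ℝ) (i m : ℤ) (mk : ℝ) : ℝ :=
  (bX + (m : ℝ) + mk) * cellDelta α W₀ i

/-- IoU of the two boxes b₁, b₂ given by the cell parameterization with data
(α, W₀, H₀, b_x, b_y, i, j, m, n) and fractional offsets (i₁, j₁, m₁, n₁), (i₂, j₂, m₂, n₂). -/
noncomputable def cellIoU (α W₀ H₀ bX bY : ℝ) (i j m n : ℤ)
    (i₁ j₁ m₁ n₁ i₂ j₂ m₂ n₂ : ℝ) : ℝ :=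
  iou (cellW α W₀ i i₁) (cellW α H₀ j j₁) (cellX α W₀ bX i m m₁) (cellX α H₀ bY j n n₁)
      (cellW α W₀ i i₂) (cellW α H₀ j j₂) (cellX α W₀ bX i m m₂) (cellX α H₀ bY j n n₂)

lemma edge_scale (l a x₁ w₁ x₂ w₂ : ℝ) (hl : 0 ≤ l) :
    max 0 (min ((l * x₁ + a) + l * w₁ / 2) ((l * x₂ + a) + l * w₂ / 2) -
      max ((l * x₁ + a) - l * w₁ / 2) ((l * x₂ + a) - l * w₂ / 2)) =
    l * max 0 (min (x₁ + w₁ / 2) (x₂ + w₂ / 2) - max (x₁ - w₁ / 2) (x₂ - w₂ / 2)) := by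
  have hmono : Monotone (fun t : ℝ => l * t + a) :=
    (monotone_mul_left_of_nonneg hl).add_const a
  have h1 : (l * x₁ + a) + l * w₁ / 2 = l * (x₁ + w₁ / 2) + a := by ring
  have h2 : (l * x₂ + a) + l * w₂ / 2 = l * (x₂ + w₂ / 2) + a := by ring
  have h3 : (l * x₁ + a) - l * w₁ / 2 = l * (x₁ - w₁ / 2) + a := by ring
  have h4 : (l * x₂ + a) - l * w₂ / 2 = l * (x₂ - w₂ / 2) + a := by ring
  rw [h1, h2, h3, h4, ← hmono.map_min, ← hmono.map_max]
  have h5 : (l * min (x₁ + w₁ / 2) (x₂ + w₂ / 2) + a) -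
      (l * max (x₁ - w₁ / 2) (x₂ - w₂ / 2) + a) =
      l * (min (x₁ + w₁ / 2) (x₂ + w₂ / 2) - max (x₁ - w₁ / 2) (x₂ - w₂ / 2)) := by ring
  rw [h5, mul_max_of_nonneg _ _ hl, mul_zero]

lemma interArea_scale (l μ a b w₁ h₁ x₁ y₁ w₂ h₂ x₂ y₂ : ℝ) (hl : 0 ≤ l) (hμ : 0 ≤ μ) :
    interArea (l * w₁) (μ * h₁) (l * x₁ + a) (μ * y₁ + b)
      (l * w₂) (μ * h₂) (l * x₂ + a) (μ * y₂ + b) =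
    l * μ * interArea w₁ h₁ x₁ y₁ w₂ h₂ x₂ y₂ := by
  unfold interArea
  rw [edge_scale l a x₁ w₁ x₂ w₂ hl, edge_scale μ b y₁ h₁ y₂ h₂ hμ]
  ring

lemma iou_scale (l μ a b w₁ h₁ x₁ y₁ w₂ h₂ x₂ y₂ : ℝ) (hl : 0 < l) (hμ : 0 < μ) :
    iou (l * w₁) (μ * h₁) (l * x₁ + a) (μ * y₁ + b)
      (l * w₂) (μ * h₂) (l * x₂ + a) (μ * y₂ + b) =
    iou w₁ h₁ x₁ y₁ w₂ h₂ x₂ y₂ := by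
  unfold iou
  rw [interArea_scale l μ a b w₁ h₁ x₁ y₁ w₂ h₂ x₂ y₂ hl.le hμ.le]
  have hne : l * μ ≠ 0 := (mul_pos hl hμ).ne'
  have hden : l * w₁ * (μ * h₁) + l * w₂ * (μ * h₂) -
      l * μ * interArea w₁ h₁ x₁ y₁ w₂ h₂ x₂ y₂ =
      l * μ * (w₁ * h₁ + w₂ * h₂ - interArea w₁ h₁ x₁ y₁ w₂ h₂ x₂ y₂) := by ring
  rw [hden, mul_div_mul_left _ _ hne]

lemma cellIoU_canon (α : ℝ) (hα : 0 < α) (W₀ H₀ bX bY : ℝ)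
    (hW₀ : 0 < W₀) (hH₀ : 0 < H₀) (i j m n : ℤ)
    (i₁ j₁ m₁ n₁ i₂ j₂ m₂ n₂ : ℝ) :
    cellIoU α W₀ H₀ bX bY i j m n i₁ j₁ m₁ n₁ i₂ j₂ m₂ n₂ =
    iou (α ^ (-i₁)) (α ^ (-j₁)) ((1 - α) / (1 + α) * m₁) ((1 - α) / (1 + α) * n₁)
        (α ^ (-i₂)) (α ^ (-j₂)) ((1 - α) / (1 + α) * m₂) ((1 - α) / (1 + α) * n₂) := by
  set c : ℝ := (1 - α) / (1 + α) with hc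
  set l : ℝ := W₀ * (α ^ (i : ℝ))⁻¹ with hldef
  set μ : ℝ := H₀ * (α ^ (j : ℝ))⁻¹ with hμdef
  have hl : 0 < l := mul_pos hW₀ (inv_pos.mpr (Real.rpow_pos_of_pos hα _))
  have hμ : 0 < μ := mul_pos hH₀ (inv_pos.mpr (Real.rpow_pos_of_pos hα _))
  have hW : ∀ ik : ℝ, cellW α W₀ i ik = l * α ^ (-ik) := by
    intro ik
    rw [cellW, Real.rpow_add hα, Real.rpow_neg hα.le, hldef, div_eq_mul_inv, mul_inv]
    ring
  have hH : ∀ jk : ℝ, cellW α H₀ j jk = μ * α ^ (-jk) := by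
    intro jk
    rw [cellW, Real.rpow_add hα, Real.rpow_neg hα.le, hμdef, div_eq_mul_inv, mul_inv]
    ring
  have hX : ∀ mk : ℝ, cellX α W₀ bX i m mk = l * (c * mk) + l * c * (bX + (m : ℝ)) := by
    intro mk
    rw [cellX, cellDelta, ← Real.rpow_intCast α i, hldef, div_eq_mul_inv]
    ring
  have hY : ∀ nk : ℝ, cellX α H₀ bY j n nk = μ * (c * nk) + μ * c * (bY + (n : ℝ)) := by
    intro nk
    rw [cellX, cellDelta, ← Real.rpow_intCast α j, hμdef, div_eq_mul_inv]
    ring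
  rw [cellIoU, hW i₁, hW i₂, hH j₁, hH j₂, hX m₁, hX m₂, hY n₁, hY n₂]
  exact iou_scale l μ (l * c * (bX + (m : ℝ))) (μ * c * (bY + (n : ℝ))) _ _ _ _ _ _ _ _ hl hμ

theorem stmt_8 (α : ℝ) (hα : α ∈ Set.Ioo (0 : ℝ) 1)
    (hcond : (1 - α) / (1 + α) < Real.sqrt α)
    (i₁ j₁ m₁ n₁ i₂ j₂ m₂ n₂ : ℝ)
    (hi₁ : i₁ ∈ Set.Ico (-(1:ℝ)/2) (1/2)) (hj₁ : j₁ ∈ Set.Ico (-(1:ℝ)/2) (1/2))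
    (hm₁ : m₁ ∈ Set.Ico (-(1:ℝ)/2) (1/2)) (hn₁ : n₁ ∈ Set.Ico (-(1:ℝ)/2) (1/2))
    (hi₂ : i₂ ∈ Set.Ico (-(1:ℝ)/2) (1/2)) (hj₂ : j₂ ∈ Set.Ico (-(1:ℝ)/2) (1/2))
    (hm₂ : m₂ ∈ Set.Ico (-(1:ℝ)/2) (1/2)) (hn₂ : n₂ ∈ Set.Ico (-(1:ℝ)/2) (1/2))
    (W₀ H₀ bX bY : ℝ) (hW₀ : 0 < W₀) (hH₀ : 0 < H₀) (i j m n : ℤ)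
    (W₀' H₀' bX' bY' : ℝ) (hW₀' : 0 < W₀') (hH₀' : 0 < H₀') (i' j' m' n' : ℤ) :
    cellIoU α W₀ H₀ bX bY i j m n i₁ j₁ m₁ n₁ i₂ j₂ m₂ n₂ =
      cellIoU α W₀' H₀' bX' bY' i' j' m' n' i₁ j₁ m₁ n₁ i₂ j₂ m₂ n₂ := by
  rw [cellIoU_canon α hα.1 W₀ H₀ bX bY hW₀ hH₀ i j m n,
    cellIoU_canon α hα.1 W₀' H₀' bX' bY' hW₀' hH₀' i' j' m' n']
end

section
/- (Lemma 1) Fix α ∈ (0, 1) with (1 − α)/(1 + α) < √α, cell parameterization data W₀, H₀ > 0, b_x, b_y ∈ ℝ, i, j, m, n ∈ ℤ, and fix the fractional offsets i₁, j₁, n₁, i₂, j₂, m₂, n₂ ∈ [−1/2, 1/2]. Then the function m₁ ↦ IoU(b₁, b₂) of the two parameterized boxes, defined on [−1/2, 1/2], attains its minimum at m₁ = −1/2 or m₁ = 1/2. -/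
lemma qc_aux (a b c u₀ u u₁ : ℝ) (h0 : u₀ ≤ u) (h1 : u ≤ u₁) :
    min (min (u₀ + a) b - max (u₀ - a) c) (min (u₁ + a) b - max (u₁ - a) c) ≤
      min (u + a) b - max (u - a) c := by
  simp only [min_def, max_def]
  split_ifs <;> linarith

lemma div_mono_aux (S P I₁ I₂ : ℝ) (hP : 0 < P) (h0 : 0 ≤ I₁) (h12 : I₁ ≤ I₂)
    (h2 : I₂ + P ≤ S) : I₁ / (S - I₁) ≤ I₂ / (S - I₂) := by
  have hS2 : 0 < S - I₂ := by linarith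
  have hS1 : 0 < S - I₁ := by linarith
  rw [div_le_div_iff₀ hS1 hS2]
  nlinarith

lemma interArea_nonneg (w₁ h₁ x₁ y₁ w₂ h₂ x₂ y₂ : ℝ) :
    0 ≤ interArea w₁ h₁ x₁ y₁ w₂ h₂ x₂ y₂ :=
  mul_nonneg (le_max_left _ _) (le_max_left _ _)

lemma interArea_le₂ (w₁ h₁ x₁ y₁ w₂ h₂ x₂ y₂ : ℝ) (hw₂ : 0 ≤ w₂) (hh₂ : 0 ≤ h₂) :
    interArea w₁ h₁ x₁ y₁ w₂ h₂ x₂ y₂ ≤ w₂ * h₂ := by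
  have hx : max 0 (min (x₁ + w₁ / 2) (x₂ + w₂ / 2) - max (x₁ - w₁ / 2) (x₂ - w₂ / 2)) ≤ w₂ := by
    refine max_le hw₂ ?_
    have h1 := min_le_right (x₁ + w₁ / 2) (x₂ + w₂ / 2)
    have h2 := le_max_right (x₁ - w₁ / 2) (x₂ - w₂ / 2)
    linarith
  have hy : max 0 (min (y₁ + h₁ / 2) (y₂ + h₂ / 2) - max (y₁ - h₁ / 2) (y₂ - h₂ / 2)) ≤ h₂ := by
    refine max_le hh₂ ?_
    have h1 := min_le_right (y₁ + h₁ / 2) (y₂ + h₂ / 2)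
    have h2 := le_max_right (y₁ - h₁ / 2) (y₂ - h₂ / 2)
    linarith
  exact mul_le_mul hx hy (le_max_left _ _) hw₂

theorem stmt_12 (α : ℝ) (hα : α ∈ Set.Ioo (0 : ℝ) 1)
    (hcond : (1 - α) / (1 + α) < Real.sqrt α)
    (W₀ H₀ bX bY : ℝ) (hW₀ : 0 < W₀) (hH₀ : 0 < H₀) (i j m n : ℤ)
    (i₁ j₁ n₁ i₂ j₂ m₂ n₂ : ℝ)
    (hi₁ : i₁ ∈ Set.Icc (-(1:ℝ)/2) (1/2)) (hj₁ : j₁ ∈ Set.Icc (-(1:ℝ)/2) (1/2))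
    (hn₁ : n₁ ∈ Set.Icc (-(1:ℝ)/2) (1/2))
    (hi₂ : i₂ ∈ Set.Icc (-(1:ℝ)/2) (1/2)) (hj₂ : j₂ ∈ Set.Icc (-(1:ℝ)/2) (1/2))
    (hm₂ : m₂ ∈ Set.Icc (-(1:ℝ)/2) (1/2)) (hn₂ : n₂ ∈ Set.Icc (-(1:ℝ)/2) (1/2)) :
    ∃ m₁ ∈ ({-(1:ℝ)/2, 1/2} : Set ℝ),
      ∀ t ∈ Set.Icc (-(1:ℝ)/2) (1/2),
        cellIoU α W₀ H₀ bX bY i j m n i₁ j₁ m₁ n₁ i₂ j₂ m₂ n₂ ≤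
          cellIoU α W₀ H₀ bX bY i j m n i₁ j₁ t n₁ i₂ j₂ m₂ n₂ := by
  obtain ⟨hα0, hα1⟩ := hα
  set w₁ := cellW α W₀ i i₁ with hw₁def
  set h₁ := cellW α H₀ j j₁ with hh₁def
  set w₂ := cellW α W₀ i i₂ with hw₂def
  set h₂ := cellW α H₀ j j₂ with hh₂def
  set y₁ := cellX α H₀ bY j n n₁
  set y₂ := cellX α H₀ bY j n n₂
  set x₂ := cellX α W₀ bX i m m₂
  have hw₁ : 0 < w₁ := div_pos hW₀ (Real.rpow_pos_of_pos hα0 _)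
  have hh₁ : 0 < h₁ := div_pos hH₀ (Real.rpow_pos_of_pos hα0 _)
  have hw₂ : 0 < w₂ := div_pos hW₀ (Real.rpow_pos_of_pos hα0 _)
  have hh₂ : 0 < h₂ := div_pos hH₀ (Real.rpow_pos_of_pos hα0 _)
  have hδ : 0 ≤ cellDelta α W₀ i := by
    apply mul_nonneg (le_of_lt (div_pos hW₀ (zpow_pos hα0 _)))
    apply div_nonneg <;> linarith
  -- the intersection area as a function of m₁
  set I : ℝ → ℝ := fun t => interArea w₁ h₁ (cellX α W₀ bX i m t) y₁ w₂ h₂ x₂ y₂ with hI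
  have key : ∀ t ∈ Set.Icc (-(1:ℝ)/2) (1/2), min (I (-(1:ℝ)/2)) (I (1/2)) ≤ I t := by
    intro t ht
    have hmono : ∀ s u : ℝ, s ≤ u → cellX α W₀ bX i m s ≤ cellX α W₀ bX i m u := by
      intro s u hsu
      exact mul_le_mul_of_nonneg_right (by linarith) hδ
    have h0 := hmono _ _ ht.1
    have h1 := hmono _ _ ht.2
    have hc := qc_aux (w₁ / 2) (x₂ + w₂ / 2) (x₂ - w₂ / 2)
      (cellX α W₀ bX i m (-(1:ℝ)/2)) (cellX α W₀ bX i m t) (cellX α W₀ bX i m (1/2)) h0 h1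
    have hIy : 0 ≤ max 0 (min (y₁ + h₁ / 2) (y₂ + h₂ / 2) - max (y₁ - h₁ / 2) (y₂ - h₂ / 2)) :=
      le_max_left _ _
    simp only [hI, interArea]
    rw [← min_mul_of_nonneg _ _ hIy]
    apply mul_le_mul_of_nonneg_right _ hIy
    rw [← max_min_distrib_left]
    exact max_le_max le_rfl hc
  have main : ∀ (e : ℝ), (∀ t ∈ Set.Icc (-(1:ℝ)/2) (1/2), I e ≤ I t) →
      ∀ t ∈ Set.Icc (-(1:ℝ)/2) (1/2),
        cellIoU α W₀ H₀ bX bY i j m n i₁ j₁ e n₁ i₂ j₂ m₂ n₂ ≤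
          cellIoU α W₀ H₀ bX bY i j m n i₁ j₁ t n₁ i₂ j₂ m₂ n₂ := by
    intro e he t ht
    show iou w₁ h₁ _ y₁ w₂ h₂ x₂ y₂ ≤ iou w₁ h₁ _ y₁ w₂ h₂ x₂ y₂
    unfold iou
    apply div_mono_aux _ (w₁ * h₁) _ _ (mul_pos hw₁ hh₁) (interArea_nonneg _ _ _ _ _ _ _ _)
      (he t ht)
    have := interArea_le₂ w₁ h₁ (cellX α W₀ bX i m t) y₁ w₂ h₂ x₂ y₂ hw₂.le hh₂.le
    show I t + w₁ * h₁ ≤ w₁ * h₁ + w₂ * h₂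
    simp only [hI] at *
    linarith
  rcases le_total (I (-(1:ℝ)/2)) (I (1/2)) with h | h
  · exact ⟨-(1:ℝ)/2, Or.inl rfl, main _ (fun t ht => le_trans (by rw [min_eq_left h]) (key t ht))⟩
  · exact ⟨1/2, Or.inr rfl, main _ (fun t ht => le_trans (by rw [min_eq_right h]) (key t ht))⟩
end

section
/- (Lemma 2) Fix α ∈ (0, 1) with (1 − α)/(1 + α) < √α, cell parameterization data W₀, H₀ > 0, b_x, b_y ∈ ℝ, i, j, m, n ∈ ℤ, and fix the fractional offsets j₁, m₁, n₁, i₂, j₂, m₂, n₂ ∈ [−1/2, 1/2]. Then the function i₁ ↦ IoU(b₁, b₂) of the two parameterized boxes, defined on [−1/2, 1/2], attains its minimum at i₁ = −1/2 or i₁ = 1/2. -/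
private lemma piece (p q a b w : ℝ) (haw : a ≤ w) (hwb : w ≤ b)
    (ha : 0 ≤ p * a + q) (hb : 0 ≤ p * b + q) : 0 ≤ p * w + q := by
  rcases le_total 0 p with hp | hp
  · nlinarith [mul_nonneg hp (sub_nonneg.2 haw)]
  · nlinarith [mul_nonneg (neg_nonneg.2 hp) (sub_nonneg.2 hwb)]

private lemma min_concave (K P Q x₁ L R a b w : ℝ) (hK : 0 ≤ K) (haw : a ≤ w) (hwb : w ≤ b)
    (ha : 0 ≤ K * (min (x₁ + a/2) R - max (x₁ - a/2) L) - (P * a + Q))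
    (hb : 0 ≤ K * (min (x₁ + b/2) R - max (x₁ - b/2) L) - (P * b + Q)) :
    0 ≤ K * (min (x₁ + w/2) R - max (x₁ - w/2) L) - (P * w + Q) := by
  have h4 : ∀ v : ℝ, min (x₁ + v/2) R - max (x₁ - v/2) L ≤ v ∧
      min (x₁ + v/2) R - max (x₁ - v/2) L ≤ (x₁ + v/2) - L ∧
      min (x₁ + v/2) R - max (x₁ - v/2) L ≤ R - (x₁ - v/2) ∧
      min (x₁ + v/2) R - max (x₁ - v/2) L ≤ R - L := by
    intro v
    have m1 := min_le_left (x₁ + v/2) R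
    have m2 := min_le_right (x₁ + v/2) R
    have m3 := le_max_left (x₁ - v/2) L
    have m4 := le_max_right (x₁ - v/2) L
    exact ⟨by linarith, by linarith, by linarith, by linarith⟩
  obtain ⟨a1, a2, a3, a4⟩ := h4 a
  obtain ⟨b1, b2, b3, b4⟩ := h4 b
  rcases le_total (x₁ + w/2) R with h1 | h1 <;> rcases le_total (x₁ - w/2) L with h2 | h2
  · rw [min_eq_left h1, max_eq_right h2]
    have ka := mul_le_mul_of_nonneg_left a2 hK
    have kb := mul_le_mul_of_nonneg_left b2 hK
    have hpw := piece (K/2 - P) (K * (x₁ - L) - Q) a b w haw hwb (by linarith) (by linarith)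
    linarith [hpw]
  · rw [min_eq_left h1, max_eq_left h2]
    have ka := mul_le_mul_of_nonneg_left a1 hK
    have kb := mul_le_mul_of_nonneg_left b1 hK
    have hpw := piece (K - P) (-Q) a b w haw hwb (by linarith) (by linarith)
    linarith [hpw]
  · rw [min_eq_right h1, max_eq_right h2]
    have ka := mul_le_mul_of_nonneg_left a4 hK
    have kb := mul_le_mul_of_nonneg_left b4 hK
    have hpw := piece (-P) (K * (R - L) - Q) a b w haw hwb (by linarith) (by linarith)
    linarith [hpw]
  · rw [min_eq_right h1, max_eq_left h2]
    have ka := mul_le_mul_of_nonneg_left a3 hK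
    have kb := mul_le_mul_of_nonneg_left b3 hK
    have hpw := piece (K/2 - P) (K * (R - x₁) - Q) a b w haw hwb (by linarith) (by linarith)
    linarith [hpw]

private lemma iou_endpoint_min (h₁ w₂ h₂ x₁ y₁ x₂ y₂ wa wb : ℝ)
    (hh₁ : 0 < h₁) (hw₂ : 0 < w₂) (hh₂ : 0 < h₂) (hwa : 0 < wa) :
    ∀ w : ℝ, wa ≤ w → w ≤ wb →
      min (iou wa h₁ x₁ y₁ w₂ h₂ x₂ y₂) (iou wb h₁ x₁ y₁ w₂ h₂ x₂ y₂) ≤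
        iou w h₁ x₁ y₁ w₂ h₂ x₂ y₂ := by
  intro w haw hwb
  have hw : 0 < w := hwa.trans_le haw
  have hb : 0 < wb := hw.trans_le hwb
  set Ly : ℝ := max 0 (min (y₁ + h₁ / 2) (y₂ + h₂ / 2) - max (y₁ - h₁ / 2) (y₂ - h₂ / 2))
    with hLydef
  have hiou : ∀ v : ℝ, iou v h₁ x₁ y₁ w₂ h₂ x₂ y₂ =
      (max 0 (min (x₁ + v / 2) (x₂ + w₂ / 2) - max (x₁ - v / 2) (x₂ - w₂ / 2)) * Ly) /
        (v * h₁ + w₂ * h₂ -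
          max 0 (min (x₁ + v / 2) (x₂ + w₂ / 2) - max (x₁ - v / 2) (x₂ - w₂ / 2)) * Ly) :=
    fun v => rfl
  have hLy0 : 0 ≤ Ly := le_max_left _ _
  have hLyh : Ly ≤ h₂ := by
    have m2 := min_le_right (y₁ + h₁ / 2) (y₂ + h₂ / 2)
    have m4 := le_max_right (y₁ - h₁ / 2) (y₂ - h₂ / 2)
    exact max_le (by linarith) (by linarith)
  -- generic facts about the x-overlap
  have hXle : ∀ v : ℝ,
      max 0 (min (x₁ + v / 2) (x₂ + w₂ / 2) - max (x₁ - v / 2) (x₂ - w₂ / 2)) ≤ w₂ := by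
    intro v
    have m2 := min_le_right (x₁ + v / 2) (x₂ + w₂ / 2)
    have m4 := le_max_right (x₁ - v / 2) (x₂ - w₂ / 2)
    exact max_le (le_of_lt hw₂) (by linarith)
  have hX0 : ∀ v : ℝ,
      0 ≤ max 0 (min (x₁ + v / 2) (x₂ + w₂ / 2) - max (x₁ - v / 2) (x₂ - w₂ / 2)) :=
    fun v => le_max_left _ _
  have hD : ∀ v : ℝ, 0 < v → 0 < v * h₁ + w₂ * h₂ -
      max 0 (min (x₁ + v / 2) (x₂ + w₂ / 2) - max (x₁ - v / 2) (x₂ - w₂ / 2)) * Ly := by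
    intro v hv
    have := mul_le_mul (hXle v) hLyh hLy0 (le_of_lt hw₂)
    nlinarith
  have hf0 : ∀ v : ℝ, 0 < v → 0 ≤ iou v h₁ x₁ y₁ w₂ h₂ x₂ y₂ := by
    intro v hv
    rw [hiou v]
    exact div_nonneg (mul_nonneg (hX0 v) hLy0) (le_of_lt (hD v hv))
  set c : ℝ := min (iou wa h₁ x₁ y₁ w₂ h₂ x₂ y₂) (iou wb h₁ x₁ y₁ w₂ h₂ x₂ y₂) with hcdef
  have hca : c ≤ iou wa h₁ x₁ y₁ w₂ h₂ x₂ y₂ := min_le_left _ _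
  have hcb : c ≤ iou wb h₁ x₁ y₁ w₂ h₂ x₂ y₂ := min_le_right _ _
  have hc0 : 0 ≤ c := le_min (hf0 wa hwa) (hf0 wb hb)
  by_cases hA : min (x₁ + wa / 2) (x₂ + w₂ / 2) - max (x₁ - wa / 2) (x₂ - w₂ / 2) ≤ 0
  · -- intersection is empty at the left endpoint, so iou at wa is 0
    have : iou wa h₁ x₁ y₁ w₂ h₂ x₂ y₂ = 0 := by
      rw [hiou wa, max_eq_left hA, zero_mul, zero_div]
    have := hf0 w hw
    linarith [hca, this]
  · push_neg at hA
    have hmono : ∀ v u : ℝ, v ≤ u →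
        min (x₁ + v / 2) (x₂ + w₂ / 2) - max (x₁ - v / 2) (x₂ - w₂ / 2) ≤
          min (x₁ + u / 2) (x₂ + w₂ / 2) - max (x₁ - u / 2) (x₂ - w₂ / 2) := by
      intro v u h
      have := min_le_min (show x₁ + v / 2 ≤ x₁ + u / 2 by linarith) (le_refl (x₂ + w₂ / 2))
      have := max_le_max (show x₁ - u / 2 ≤ x₁ - v / 2 by linarith) (le_refl (x₂ - w₂ / 2))
      linarith [min_le_min (show x₁ + v / 2 ≤ x₁ + u / 2 by linarith)
          (le_refl (x₂ + w₂ / 2)),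
        max_le_max (show x₁ - u / 2 ≤ x₁ - v / 2 by linarith) (le_refl (x₂ - w₂ / 2))]
    have hAw : 0 < min (x₁ + w / 2) (x₂ + w₂ / 2) - max (x₁ - w / 2) (x₂ - w₂ / 2) :=
      hA.trans_le (hmono wa w haw)
    have hAb : 0 < min (x₁ + wb / 2) (x₂ + w₂ / 2) - max (x₁ - wb / 2) (x₂ - w₂ / 2) :=
      hA.trans_le (hmono wa wb (haw.trans hwb))
    -- rewrite away the max 0
    have hma := max_eq_right (le_of_lt hA)
    have hmw := max_eq_right (le_of_lt hAw)
    have hmb := max_eq_right (le_of_lt hAb)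
    have hDa := hD wa hwa; rw [hma] at hDa
    have hDw := hD w hw; rw [hmw] at hDw
    have hDb := hD wb hb; rw [hmb] at hDb
    have hca' := hca; have hcb' := hcb
    rw [hiou wa, hma, le_div_iff₀ hDa] at hca'
    rw [hiou wb, hmb, le_div_iff₀ hDb] at hcb'
    rw [hiou w, hmw, le_div_iff₀ hDw]
    have key := min_concave ((1 + c) * Ly) (c * h₁) (c * (w₂ * h₂)) x₁
      (x₂ - w₂ / 2) (x₂ + w₂ / 2) wa wb w
      (mul_nonneg (by linarith) hLy0) haw hwb (by linarith) (by linarith)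
    linarith [key]

theorem stmt_13 (α : ℝ) (hα : α ∈ Set.Ioo (0 : ℝ) 1)
    (hcond : (1 - α) / (1 + α) < Real.sqrt α)
    (W₀ H₀ bX bY : ℝ) (hW₀ : 0 < W₀) (hH₀ : 0 < H₀) (i j m n : ℤ)
    (j₁ m₁ n₁ i₂ j₂ m₂ n₂ : ℝ)
    (hj₁ : j₁ ∈ Set.Icc (-(1:ℝ)/2) (1/2)) (hm₁ : m₁ ∈ Set.Icc (-(1:ℝ)/2) (1/2))
    (hn₁ : n₁ ∈ Set.Icc (-(1:ℝ)/2) (1/2))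
    (hi₂ : i₂ ∈ Set.Icc (-(1:ℝ)/2) (1/2)) (hj₂ : j₂ ∈ Set.Icc (-(1:ℝ)/2) (1/2))
    (hm₂ : m₂ ∈ Set.Icc (-(1:ℝ)/2) (1/2)) (hn₂ : n₂ ∈ Set.Icc (-(1:ℝ)/2) (1/2)) :
    ∃ i₁ ∈ ({-(1:ℝ)/2, 1/2} : Set ℝ),
      ∀ t ∈ Set.Icc (-(1:ℝ)/2) (1/2),
        cellIoU α W₀ H₀ bX bY i j m n i₁ j₁ m₁ n₁ i₂ j₂ m₂ n₂ ≤
          cellIoU α W₀ H₀ bX bY i j m n t j₁ m₁ n₁ i₂ j₂ m₂ n₂ := by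
  obtain ⟨hα0, hα1⟩ := hα
  have hpos : ∀ (W : ℝ) (k : ℤ) (t : ℝ), 0 < W → 0 < cellW α W k t :=
    fun W k t hW => div_pos hW (Real.rpow_pos_of_pos hα0 _)
  have hmono : ∀ t u : ℝ, t ≤ u → cellW α W₀ i t ≤ cellW α W₀ i u := by
    intro t u h
    unfold cellW
    exact div_le_div_of_nonneg_left hW₀.le (Real.rpow_pos_of_pos hα0 _)
      (Real.rpow_le_rpow_of_exponent_ge hα0 hα1.le (by linarith))
  have main : ∀ t ∈ Set.Icc (-(1:ℝ)/2) (1/2),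
      min (cellIoU α W₀ H₀ bX bY i j m n (-(1:ℝ)/2) j₁ m₁ n₁ i₂ j₂ m₂ n₂)
          (cellIoU α W₀ H₀ bX bY i j m n (1/2) j₁ m₁ n₁ i₂ j₂ m₂ n₂) ≤
        cellIoU α W₀ H₀ bX bY i j m n t j₁ m₁ n₁ i₂ j₂ m₂ n₂ := by
    intro t ht
    exact iou_endpoint_min (cellW α H₀ j j₁) (cellW α W₀ i i₂) (cellW α H₀ j j₂)
      (cellX α W₀ bX i m m₁) (cellX α H₀ bY j n n₁) (cellX α W₀ bX i m m₂)
      (cellX α H₀ bY j n n₂) (cellW α W₀ i (-(1:ℝ)/2)) (cellW α W₀ i (1/2))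
      (hpos H₀ j j₁ hH₀) (hpos W₀ i i₂ hW₀) (hpos H₀ j j₂ hH₀)
      (hpos W₀ i (-(1:ℝ)/2) hW₀) (cellW α W₀ i t) (hmono _ _ ht.1) (hmono _ _ ht.2)
  rcases le_total (cellIoU α W₀ H₀ bX bY i j m n (-(1:ℝ)/2) j₁ m₁ n₁ i₂ j₂ m₂ n₂)
      (cellIoU α W₀ H₀ bX bY i j m n (1/2) j₁ m₁ n₁ i₂ j₂ m₂ n₂) with h | h
  · refine ⟨-(1:ℝ)/2, Or.inl rfl, fun t ht => ?_⟩
    have := main t ht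
    rwa [min_eq_left h] at this
  · refine ⟨(1:ℝ)/2, Or.inr rfl, fun t ht => ?_⟩
    have := main t ht
    rwa [min_eq_right h] at this
end

section
/- (Theorem 2) Fix α ∈ (0, 1) with (1 − α)/(1 + α) < √α and cell parameterization data W₀, H₀ > 0, b_x, b_y ∈ ℝ, i, j, m, n ∈ ℤ. Viewing the IoU of the two parameterized boxes b₁, b₂ as a function of the fractional-offset vector (i₁, j₁, m₁, n₁, i₂, j₂, m₂, n₂) ∈ [−1/2, 1/2]⁸, this function attains a minimum over the cube [−1/2, 1/2]⁸, and the minimum is attained at some vertex of the cube, i.e., at a point all of whose eight coordinates equal −1/2 or 1/2. -/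
section Aux

theorem min_comb {p q u₁ v₁ u₂ v₂ : ℝ} (hp : 0 ≤ p) (hq : 0 ≤ q) :
    p * min u₁ v₁ + q * min u₂ v₂ ≤ min (p * u₁ + q * u₂) (p * v₁ + q * v₂) := by
  refine le_min (add_le_add ?_ ?_) (add_le_add ?_ ?_) <;>
    apply mul_le_mul_of_nonneg_left (by simp) (by assumption)

theorem max_comb {p q u₁ v₁ u₂ v₂ : ℝ} (hp : 0 ≤ p) (hq : 0 ≤ q) :
    max (p * u₁ + q * u₂) (p * v₁ + q * v₂) ≤ p * max u₁ v₁ + q * max u₂ v₂ := by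
  refine max_le (add_le_add ?_ ?_) (add_le_add ?_ ?_) <;>
    apply mul_le_mul_of_nonneg_left (by simp) (by assumption)

theorem key (Ly Ta Tb Tx Sa Sb Sx s Ia Ib Ix : ℝ)
    (hs0 : 0 ≤ s) (hs1 : s ≤ 1) (hLy : 0 ≤ Ly)
    (hT : (1 - s) * Ta + s * Tb ≤ Tx)
    (hS : Sx = (1 - s) * Sa + s * Sb)
    (hIa : Ia = max 0 Ta * Ly) (hIb : Ib = max 0 Tb * Ly) (hIx : Ix = max 0 Tx * Ly)
    (hda : Ia < Sa) (hdb : Ib < Sb) (hdx : Ix < Sx) :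
    min (Ia / (Sa - Ia)) (Ib / (Sb - Ib)) ≤ Ix / (Sx - Ix) := by
  have hIa0 : 0 ≤ Ia := hIa ▸ mul_nonneg (le_max_left _ _) hLy
  have hIb0 : 0 ≤ Ib := hIb ▸ mul_nonneg (le_max_left _ _) hLy
  have hIx0 : 0 ≤ Ix := hIx ▸ mul_nonneg (le_max_left _ _) hLy
  obtain ⟨t, ht⟩ : ∃ t, t = min (Ia / (Sa - Ia)) (Ib / (Sb - Ib)) := ⟨_, rfl⟩
  rw [← ht]
  rcases le_or_gt t 0 with h | h
  · exact h.trans (div_nonneg hIx0 (by linarith))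
  · have hta : t ≤ Ia / (Sa - Ia) := ht ▸ min_le_left _ _
    have htb : t ≤ Ib / (Sb - Ib) := ht ▸ min_le_right _ _
    have ha' : t * (Sa - Ia) ≤ Ia := (le_div_iff₀ (by linarith)).mp hta
    have hb' : t * (Sb - Ib) ≤ Ib := (le_div_iff₀ (by linarith)).mp htb
    have hIapos : 0 < Ia := by nlinarith
    have hIbpos : 0 < Ib := by nlinarith
    have hLypos : 0 < Ly := by
      rcases hLy.lt_or_eq with h' | h'
      · exact h'
      · rw [← h', mul_zero] at hIa; linarith
    have hMTa : 0 < max 0 Ta := by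
      rcases mul_pos_iff.mp (hIa ▸ hIapos) with ⟨h1, _⟩ | ⟨_, h2⟩
      · exact h1
      · linarith
    have hMTb : 0 < max 0 Tb := by
      rcases mul_pos_iff.mp (hIb ▸ hIbpos) with ⟨h1, _⟩ | ⟨_, h2⟩
      · exact h1
      · linarith
    have hTapos : 0 < Ta := by
      rcases lt_max_iff.mp hMTa with h' | h'
      · linarith
      · exact h'
    have hTbpos : 0 < Tb := by
      rcases lt_max_iff.mp hMTb with h' | h'
      · linarith
      · exact h'
    have hTxpos : 0 < Tx := by
      rcases le_total Ta Tb with h' | h'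
      · nlinarith [mul_le_mul_of_nonneg_left h' hs0]
      · nlinarith [mul_le_mul_of_nonneg_left h' (by linarith : (0:ℝ) ≤ 1 - s)]
    have e1 : Ix = Tx * Ly := by rw [hIx, max_eq_right hTxpos.le]
    have e2 : Ia = Ta * Ly := by rw [hIa, max_eq_right hTapos.le]
    have e3 : Ib = Tb * Ly := by rw [hIb, max_eq_right hTbpos.le]
    have c3 : ((1 - s) * Ta + s * Tb) * Ly ≤ Tx * Ly :=
      mul_le_mul_of_nonneg_right hT hLy
    have hmain : t * Sx ≤ (1 + t) * Ix := by
      calc t * Sx = (1 - s) * (t * Sa) + s * (t * Sb) := by rw [hS]; ring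
        _ ≤ (1 - s) * ((1 + t) * Ia) + s * ((1 + t) * Ib) :=
            add_le_add (mul_le_mul_of_nonneg_left (by nlinarith) (by linarith))
              (mul_le_mul_of_nonneg_left (by nlinarith) hs0)
        _ = (1 + t) * (((1 - s) * Ta + s * Tb) * Ly) := by rw [e2, e3]; ring
        _ ≤ (1 + t) * (Tx * Ly) := mul_le_mul_of_nonneg_left c3 (by linarith)
        _ = (1 + t) * Ix := by rw [e1]
    have q1 : t * (Sx - Ix) = t * Sx - t * Ix := by ring
    have q2 : (1 + t) * Ix = Ix + t * Ix := by ring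
    exact (le_div_iff₀ (by linarith)).mpr (by linarith)

theorem interArea_lt {w₁ h₁ w₂ h₂ : ℝ} (x₁ y₁ x₂ y₂ : ℝ)
    (hw₁ : 0 < w₁) (hh₁ : 0 < h₁) (hw₂ : 0 < w₂) (hh₂ : 0 < h₂) :
    interArea w₁ h₁ x₁ y₁ w₂ h₂ x₂ y₂ < w₁ * h₁ + w₂ * h₂ := by
  unfold interArea
  have hX : max 0 (min (x₁ + w₁ / 2) (x₂ + w₂ / 2) - max (x₁ - w₁ / 2) (x₂ - w₂ / 2)) ≤ w₁ :=
    max_le hw₁.le (by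
      have h1 := min_le_left (x₁ + w₁ / 2) (x₂ + w₂ / 2)
      have h2 := le_max_left (x₁ - w₁ / 2) (x₂ - w₂ / 2)
      linarith)
  have hY : max 0 (min (y₁ + h₁ / 2) (y₂ + h₂ / 2) - max (y₁ - h₁ / 2) (y₂ - h₂ / 2)) ≤ h₁ :=
    max_le hh₁.le (by
      have h1 := min_le_left (y₁ + h₁ / 2) (y₂ + h₂ / 2)
      have h2 := le_max_left (y₁ - h₁ / 2) (y₂ - h₂ / 2)
      linarith)
  have := mul_le_mul hX hY (le_max_left _ _) hw₁.le
  nlinarith [mul_pos hw₂ hh₂]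

theorem pos_endpoint (w₁ h₁ y₁ w₂ h₂ x₂ y₂ xa xb x : ℝ)
    (hw₁ : 0 < w₁) (hh₁ : 0 < h₁) (hw₂ : 0 < w₂) (hh₂ : 0 < h₂)
    (h1 : xa ≤ x) (h2 : x ≤ xb) :
    min (iou w₁ h₁ xa y₁ w₂ h₂ x₂ y₂) (iou w₁ h₁ xb y₁ w₂ h₂ x₂ y₂)
      ≤ iou w₁ h₁ x y₁ w₂ h₂ x₂ y₂ := by
  rcases lt_or_ge xa xb with hd | hd
  · set s := (x - xa) / (xb - xa) with hs
    have hs0 : 0 ≤ s := div_nonneg (by linarith) (by linarith)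
    have hs1 : s ≤ 1 := (div_le_one (by linarith)).mpr (by linarith)
    have hx : x = (1 - s) * xa + s * xb := by
      have hx1 : s * (xb - xa) = x - xa := by
        rw [hs]; exact div_mul_cancel₀ _ (sub_ne_zero.mpr hd.ne')
      have hx2 : (1 - s) * xa + s * xb = xa + s * (xb - xa) := by ring
      rw [hx2]; linarith
    have e1 : x + w₁ / 2 = (1 - s) * (xa + w₁ / 2) + s * (xb + w₁ / 2) := by rw [hx]; ring
    have e2 : x₂ + w₂ / 2 = (1 - s) * (x₂ + w₂ / 2) + s * (x₂ + w₂ / 2) := by ring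
    have e3 : x - w₁ / 2 = (1 - s) * (xa - w₁ / 2) + s * (xb - w₁ / 2) := by rw [hx]; ring
    have e4 : x₂ - w₂ / 2 = (1 - s) * (x₂ - w₂ / 2) + s * (x₂ - w₂ / 2) := by ring
    have hT : (1 - s) * (min (xa + w₁ / 2) (x₂ + w₂ / 2) - max (xa - w₁ / 2) (x₂ - w₂ / 2))
          + s * (min (xb + w₁ / 2) (x₂ + w₂ / 2) - max (xb - w₁ / 2) (x₂ - w₂ / 2))
        ≤ min (x + w₁ / 2) (x₂ + w₂ / 2) - max (x - w₁ / 2) (x₂ - w₂ / 2) := by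
      calc (1 - s) * (min (xa + w₁ / 2) (x₂ + w₂ / 2) - max (xa - w₁ / 2) (x₂ - w₂ / 2))
            + s * (min (xb + w₁ / 2) (x₂ + w₂ / 2) - max (xb - w₁ / 2) (x₂ - w₂ / 2))
          = ((1 - s) * min (xa + w₁ / 2) (x₂ + w₂ / 2) + s * min (xb + w₁ / 2) (x₂ + w₂ / 2))
            - ((1 - s) * max (xa - w₁ / 2) (x₂ - w₂ / 2)
              + s * max (xb - w₁ / 2) (x₂ - w₂ / 2)) := by ring
        _ ≤ min ((1 - s) * (xa + w₁ / 2) + s * (xb + w₁ / 2))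
              ((1 - s) * (x₂ + w₂ / 2) + s * (x₂ + w₂ / 2))
            - max ((1 - s) * (xa - w₁ / 2) + s * (xb - w₁ / 2))
              ((1 - s) * (x₂ - w₂ / 2) + s * (x₂ - w₂ / 2)) :=
            sub_le_sub (min_comb (by linarith) hs0) (max_comb (by linarith) hs0)
        _ = min (x + w₁ / 2) (x₂ + w₂ / 2) - max (x - w₁ / 2) (x₂ - w₂ / 2) := by
            rw [← e1, ← e2, ← e3, ← e4]
    exact key (max 0 (min (y₁ + h₁ / 2) (y₂ + h₂ / 2) - max (y₁ - h₁ / 2) (y₂ - h₂ / 2)))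
      (min (xa + w₁ / 2) (x₂ + w₂ / 2) - max (xa - w₁ / 2) (x₂ - w₂ / 2))
      (min (xb + w₁ / 2) (x₂ + w₂ / 2) - max (xb - w₁ / 2) (x₂ - w₂ / 2))
      (min (x + w₁ / 2) (x₂ + w₂ / 2) - max (x - w₁ / 2) (x₂ - w₂ / 2))
      (w₁ * h₁ + w₂ * h₂) (w₁ * h₁ + w₂ * h₂) (w₁ * h₁ + w₂ * h₂) s
      (interArea w₁ h₁ xa y₁ w₂ h₂ x₂ y₂) (interArea w₁ h₁ xb y₁ w₂ h₂ x₂ y₂)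
      (interArea w₁ h₁ x y₁ w₂ h₂ x₂ y₂)
      hs0 hs1 (le_max_left _ _) hT (by ring) rfl rfl rfl
      (interArea_lt xa y₁ x₂ y₂ hw₁ hh₁ hw₂ hh₂)
      (interArea_lt xb y₁ x₂ y₂ hw₁ hh₁ hw₂ hh₂)
      (interArea_lt x y₁ x₂ y₂ hw₁ hh₁ hw₂ hh₂)
  · have hax : xa = x := le_antisymm h1 (by linarith)
    have hbx : xb = x := le_antisymm (by linarith) h2
    rw [hax, hbx, min_self]

theorem size_endpoint (h₁ x₁ y₁ w₂ h₂ x₂ y₂ wa wb w : ℝ)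
    (hh₁ : 0 < h₁) (hw₂ : 0 < w₂) (hh₂ : 0 < h₂) (hwa : 0 < wa)
    (h1 : wa ≤ w) (h2 : w ≤ wb) :
    min (iou wa h₁ x₁ y₁ w₂ h₂ x₂ y₂) (iou wb h₁ x₁ y₁ w₂ h₂ x₂ y₂)
      ≤ iou w h₁ x₁ y₁ w₂ h₂ x₂ y₂ := by
  have hw : 0 < w := lt_of_lt_of_le hwa h1
  have hwb : 0 < wb := lt_of_lt_of_le hw h2
  rcases lt_or_ge wa wb with hd | hd
  · set s := (w - wa) / (wb - wa) with hs
    have hs0 : 0 ≤ s := div_nonneg (by linarith) (by linarith)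
    have hs1 : s ≤ 1 := (div_le_one (by linarith)).mpr (by linarith)
    have hx : w = (1 - s) * wa + s * wb := by
      have hx1 : s * (wb - wa) = w - wa := by
        rw [hs]; exact div_mul_cancel₀ _ (sub_ne_zero.mpr hd.ne')
      have hx2 : (1 - s) * wa + s * wb = wa + s * (wb - wa) := by ring
      rw [hx2]; linarith
    have e1 : x₁ + w / 2 = (1 - s) * (x₁ + wa / 2) + s * (x₁ + wb / 2) := by rw [hx]; ring
    have e2 : x₂ + w₂ / 2 = (1 - s) * (x₂ + w₂ / 2) + s * (x₂ + w₂ / 2) := by ring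
    have e3 : x₁ - w / 2 = (1 - s) * (x₁ - wa / 2) + s * (x₁ - wb / 2) := by rw [hx]; ring
    have e4 : x₂ - w₂ / 2 = (1 - s) * (x₂ - w₂ / 2) + s * (x₂ - w₂ / 2) := by ring
    have hT : (1 - s) * (min (x₁ + wa / 2) (x₂ + w₂ / 2) - max (x₁ - wa / 2) (x₂ - w₂ / 2))
          + s * (min (x₁ + wb / 2) (x₂ + w₂ / 2) - max (x₁ - wb / 2) (x₂ - w₂ / 2))
        ≤ min (x₁ + w / 2) (x₂ + w₂ / 2) - max (x₁ - w / 2) (x₂ - w₂ / 2) := by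
      calc (1 - s) * (min (x₁ + wa / 2) (x₂ + w₂ / 2) - max (x₁ - wa / 2) (x₂ - w₂ / 2))
            + s * (min (x₁ + wb / 2) (x₂ + w₂ / 2) - max (x₁ - wb / 2) (x₂ - w₂ / 2))
          = ((1 - s) * min (x₁ + wa / 2) (x₂ + w₂ / 2) + s * min (x₁ + wb / 2) (x₂ + w₂ / 2))
            - ((1 - s) * max (x₁ - wa / 2) (x₂ - w₂ / 2)
              + s * max (x₁ - wb / 2) (x₂ - w₂ / 2)) := by ring
        _ ≤ min ((1 - s) * (x₁ + wa / 2) + s * (x₁ + wb / 2))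
              ((1 - s) * (x₂ + w₂ / 2) + s * (x₂ + w₂ / 2))
            - max ((1 - s) * (x₁ - wa / 2) + s * (x₁ - wb / 2))
              ((1 - s) * (x₂ - w₂ / 2) + s * (x₂ - w₂ / 2)) :=
            sub_le_sub (min_comb (by linarith) hs0) (max_comb (by linarith) hs0)
        _ = min (x₁ + w / 2) (x₂ + w₂ / 2) - max (x₁ - w / 2) (x₂ - w₂ / 2) := by
            rw [← e1, ← e2, ← e3, ← e4]
    exact key (max 0 (min (y₁ + h₁ / 2) (y₂ + h₂ / 2) - max (y₁ - h₁ / 2) (y₂ - h₂ / 2)))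
      (min (x₁ + wa / 2) (x₂ + w₂ / 2) - max (x₁ - wa / 2) (x₂ - w₂ / 2))
      (min (x₁ + wb / 2) (x₂ + w₂ / 2) - max (x₁ - wb / 2) (x₂ - w₂ / 2))
      (min (x₁ + w / 2) (x₂ + w₂ / 2) - max (x₁ - w / 2) (x₂ - w₂ / 2))
      (wa * h₁ + w₂ * h₂) (wb * h₁ + w₂ * h₂) (w * h₁ + w₂ * h₂) s
      (interArea wa h₁ x₁ y₁ w₂ h₂ x₂ y₂) (interArea wb h₁ x₁ y₁ w₂ h₂ x₂ y₂)
      (interArea w h₁ x₁ y₁ w₂ h₂ x₂ y₂)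
      hs0 hs1 (le_max_left _ _) hT (by rw [hx]; ring) rfl rfl rfl
      (interArea_lt x₁ y₁ x₂ y₂ hwa hh₁ hw₂ hh₂)
      (interArea_lt x₁ y₁ x₂ y₂ hwb hh₁ hw₂ hh₂)
      (interArea_lt x₁ y₁ x₂ y₂ hw hh₁ hw₂ hh₂)
  · have hax : wa = w := le_antisymm h1 (by linarith)
    have hbx : wb = w := le_antisymm (by linarith) h2
    rw [hax, hbx, min_self]

theorem iou_swap (w₁ h₁ x₁ y₁ w₂ h₂ x₂ y₂ : ℝ) :
    iou w₁ h₁ x₁ y₁ w₂ h₂ x₂ y₂ = iou w₂ h₂ x₂ y₂ w₁ h₁ x₁ y₁ := by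
  unfold iou interArea
  rw [min_comm (x₂ + w₂ / 2) (x₁ + w₁ / 2), max_comm (x₂ - w₂ / 2) (x₁ - w₁ / 2),
    min_comm (y₂ + h₂ / 2) (y₁ + h₁ / 2), max_comm (y₂ - h₂ / 2) (y₁ - h₁ / 2)]
  ring_nf

theorem iou_xy (w₁ h₁ x₁ y₁ w₂ h₂ x₂ y₂ : ℝ) :
    iou w₁ h₁ x₁ y₁ w₂ h₂ x₂ y₂ = iou h₁ w₁ y₁ x₁ h₂ w₂ y₂ x₂ := by
  unfold iou interArea
  ring_nf

end Aux


noncomputable def tv (c : Bool) : ℝ := if c then 1/2 else -(1:ℝ)/2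

theorem tv_or (c : Bool) : tv c = -(1:ℝ)/2 ∨ tv c = 1/2 := by
  cases c <;> simp [tv]

theorem bool_pick {C : ℝ} (g : ℝ → ℝ) (h : min (g (-(1:ℝ)/2)) (g (1/2)) ≤ C) :
    ∃ c : Bool, g (tv c) ≤ C := by
  rcases le_total (g (-(1:ℝ)/2)) (g (1/2)) with h' | h'
  · refine ⟨false, ?_⟩
    rw [show tv false = -(1:ℝ)/2 from by simp [tv], ← min_eq_left h']
    exact h
  · refine ⟨true, ?_⟩
    rw [show tv true = (1:ℝ)/2 from by simp [tv], ← min_eq_right h']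
    exact h

theorem cellW_pos {α W₀ : ℝ} (hα0 : 0 < α) (hW₀ : 0 < W₀) (i : ℤ) (t : ℝ) :
    0 < cellW α W₀ i t := div_pos hW₀ (Real.rpow_pos_of_pos hα0 _)

theorem cellW_mono {α W₀ : ℝ} (hα0 : 0 < α) (hα1 : α < 1) (hW₀ : 0 < W₀) (i : ℤ)
    {t t' : ℝ} (h : t ≤ t') : cellW α W₀ i t ≤ cellW α W₀ i t' :=
  div_le_div_of_nonneg_left hW₀.le (Real.rpow_pos_of_pos hα0 _)
    (Real.rpow_le_rpow_of_exponent_ge hα0 hα1.le (by linarith))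

theorem cellX_mono {α W₀ bX : ℝ} (hα0 : 0 < α) (hα1 : α < 1) (hW₀ : 0 < W₀) (i m : ℤ)
    {t t' : ℝ} (h : t ≤ t') : cellX α W₀ bX i m t ≤ cellX α W₀ bX i m t' := by
  unfold cellX
  have hδ : 0 ≤ cellDelta α W₀ i :=
    le_of_lt (mul_pos (div_pos hW₀ (zpow_pos hα0 i)) (div_pos (by linarith) (by linarith)))
  exact mul_le_mul_of_nonneg_right (by linarith) hδ

theorem cellIoU_swap (α W₀ H₀ bX bY : ℝ) (i j m n : ℤ) (i₁ j₁ m₁ n₁ i₂ j₂ m₂ n₂ : ℝ) :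
    cellIoU α W₀ H₀ bX bY i j m n i₁ j₁ m₁ n₁ i₂ j₂ m₂ n₂ =
      cellIoU α W₀ H₀ bX bY i j m n i₂ j₂ m₂ n₂ i₁ j₁ m₁ n₁ := by
  unfold cellIoU; exact iou_swap _ _ _ _ _ _ _ _

theorem cellIoU_xy (α W₀ H₀ bX bY : ℝ) (i j m n : ℤ) (i₁ j₁ m₁ n₁ i₂ j₂ m₂ n₂ : ℝ) :
    cellIoU α W₀ H₀ bX bY i j m n i₁ j₁ m₁ n₁ i₂ j₂ m₂ n₂ =
      cellIoU α H₀ W₀ bY bX j i n m j₁ i₁ n₁ m₁ j₂ i₂ n₂ m₂ := by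
  unfold cellIoU; exact iou_xy _ _ _ _ _ _ _ _

theorem coord_i1 {α : ℝ} (W₀ H₀ bX bY : ℝ) (i j m n : ℤ)
    (hα0 : 0 < α) (hα1 : α < 1) (hW₀ : 0 < W₀) (hH₀ : 0 < H₀)
    (a j₁ m₁ n₁ i₂ j₂ m₂ n₂ : ℝ) (ha : a ∈ Set.Icc (-(1:ℝ)/2) (1/2)) :
    min (cellIoU α W₀ H₀ bX bY i j m n (-(1:ℝ)/2) j₁ m₁ n₁ i₂ j₂ m₂ n₂)
        (cellIoU α W₀ H₀ bX bY i j m n (1/2) j₁ m₁ n₁ i₂ j₂ m₂ n₂)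
      ≤ cellIoU α W₀ H₀ bX bY i j m n a j₁ m₁ n₁ i₂ j₂ m₂ n₂ := by
  unfold cellIoU
  exact size_endpoint _ _ _ _ _ _ _ _ _ _
    (cellW_pos hα0 hH₀ j j₁) (cellW_pos hα0 hW₀ i i₂) (cellW_pos hα0 hH₀ j j₂)
    (cellW_pos hα0 hW₀ i (-(1:ℝ)/2))
    (cellW_mono hα0 hα1 hW₀ i ha.1) (cellW_mono hα0 hα1 hW₀ i ha.2)

theorem coord_m1 {α : ℝ} (W₀ H₀ bX bY : ℝ) (i j m n : ℤ)
    (hα0 : 0 < α) (hα1 : α < 1) (hW₀ : 0 < W₀) (hH₀ : 0 < H₀)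
    (i₁ j₁ a n₁ i₂ j₂ m₂ n₂ : ℝ) (ha : a ∈ Set.Icc (-(1:ℝ)/2) (1/2)) :
    min (cellIoU α W₀ H₀ bX bY i j m n i₁ j₁ (-(1:ℝ)/2) n₁ i₂ j₂ m₂ n₂)
        (cellIoU α W₀ H₀ bX bY i j m n i₁ j₁ (1/2) n₁ i₂ j₂ m₂ n₂)
      ≤ cellIoU α W₀ H₀ bX bY i j m n i₁ j₁ a n₁ i₂ j₂ m₂ n₂ := by
  unfold cellIoU
  exact pos_endpoint _ _ _ _ _ _ _ _ _ _
    (cellW_pos hα0 hW₀ i i₁) (cellW_pos hα0 hH₀ j j₁)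
    (cellW_pos hα0 hW₀ i i₂) (cellW_pos hα0 hH₀ j j₂)
    (cellX_mono hα0 hα1 hW₀ i m ha.1) (cellX_mono hα0 hα1 hW₀ i m ha.2)

theorem coord_j1 {α : ℝ} (W₀ H₀ bX bY : ℝ) (i j m n : ℤ)
    (hα0 : 0 < α) (hα1 : α < 1) (hW₀ : 0 < W₀) (hH₀ : 0 < H₀)
    (i₁ a m₁ n₁ i₂ j₂ m₂ n₂ : ℝ) (ha : a ∈ Set.Icc (-(1:ℝ)/2) (1/2)) :
    min (cellIoU α W₀ H₀ bX bY i j m n i₁ (-(1:ℝ)/2) m₁ n₁ i₂ j₂ m₂ n₂)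
        (cellIoU α W₀ H₀ bX bY i j m n i₁ (1/2) m₁ n₁ i₂ j₂ m₂ n₂)
      ≤ cellIoU α W₀ H₀ bX bY i j m n i₁ a m₁ n₁ i₂ j₂ m₂ n₂ := by
  rw [cellIoU_xy α W₀ H₀ bX bY i j m n i₁ (-(1:ℝ)/2) m₁ n₁ i₂ j₂ m₂ n₂,
      cellIoU_xy α W₀ H₀ bX bY i j m n i₁ ((1:ℝ)/2) m₁ n₁ i₂ j₂ m₂ n₂,
      cellIoU_xy α W₀ H₀ bX bY i j m n i₁ a m₁ n₁ i₂ j₂ m₂ n₂]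
  exact coord_i1 H₀ W₀ bY bX j i n m hα0 hα1 hH₀ hW₀ _ _ _ _ _ _ _ _ ha

theorem coord_n1 {α : ℝ} (W₀ H₀ bX bY : ℝ) (i j m n : ℤ)
    (hα0 : 0 < α) (hα1 : α < 1) (hW₀ : 0 < W₀) (hH₀ : 0 < H₀)
    (i₁ j₁ m₁ a i₂ j₂ m₂ n₂ : ℝ) (ha : a ∈ Set.Icc (-(1:ℝ)/2) (1/2)) :
    min (cellIoU α W₀ H₀ bX bY i j m n i₁ j₁ m₁ (-(1:ℝ)/2) i₂ j₂ m₂ n₂)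
        (cellIoU α W₀ H₀ bX bY i j m n i₁ j₁ m₁ (1/2) i₂ j₂ m₂ n₂)
      ≤ cellIoU α W₀ H₀ bX bY i j m n i₁ j₁ m₁ a i₂ j₂ m₂ n₂ := by
  rw [cellIoU_xy α W₀ H₀ bX bY i j m n i₁ j₁ m₁ (-(1:ℝ)/2) i₂ j₂ m₂ n₂,
      cellIoU_xy α W₀ H₀ bX bY i j m n i₁ j₁ m₁ ((1:ℝ)/2) i₂ j₂ m₂ n₂,
      cellIoU_xy α W₀ H₀ bX bY i j m n i₁ j₁ m₁ a i₂ j₂ m₂ n₂]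
  exact coord_m1 H₀ W₀ bY bX j i n m hα0 hα1 hH₀ hW₀ _ _ _ _ _ _ _ _ ha

theorem coord_i2 {α : ℝ} (W₀ H₀ bX bY : ℝ) (i j m n : ℤ)
    (hα0 : 0 < α) (hα1 : α < 1) (hW₀ : 0 < W₀) (hH₀ : 0 < H₀)
    (i₁ j₁ m₁ n₁ a j₂ m₂ n₂ : ℝ) (ha : a ∈ Set.Icc (-(1:ℝ)/2) (1/2)) :
    min (cellIoU α W₀ H₀ bX bY i j m n i₁ j₁ m₁ n₁ (-(1:ℝ)/2) j₂ m₂ n₂)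
        (cellIoU α W₀ H₀ bX bY i j m n i₁ j₁ m₁ n₁ (1/2) j₂ m₂ n₂)
      ≤ cellIoU α W₀ H₀ bX bY i j m n i₁ j₁ m₁ n₁ a j₂ m₂ n₂ := by
  rw [cellIoU_swap α W₀ H₀ bX bY i j m n i₁ j₁ m₁ n₁ (-(1:ℝ)/2) j₂ m₂ n₂,
      cellIoU_swap α W₀ H₀ bX bY i j m n i₁ j₁ m₁ n₁ ((1:ℝ)/2) j₂ m₂ n₂,
      cellIoU_swap α W₀ H₀ bX bY i j m n i₁ j₁ m₁ n₁ a j₂ m₂ n₂]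
  exact coord_i1 W₀ H₀ bX bY i j m n hα0 hα1 hW₀ hH₀ _ _ _ _ _ _ _ _ ha

theorem coord_j2 {α : ℝ} (W₀ H₀ bX bY : ℝ) (i j m n : ℤ)
    (hα0 : 0 < α) (hα1 : α < 1) (hW₀ : 0 < W₀) (hH₀ : 0 < H₀)
    (i₁ j₁ m₁ n₁ i₂ a m₂ n₂ : ℝ) (ha : a ∈ Set.Icc (-(1:ℝ)/2) (1/2)) :
    min (cellIoU α W₀ H₀ bX bY i j m n i₁ j₁ m₁ n₁ i₂ (-(1:ℝ)/2) m₂ n₂)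
        (cellIoU α W₀ H₀ bX bY i j m n i₁ j₁ m₁ n₁ i₂ (1/2) m₂ n₂)
      ≤ cellIoU α W₀ H₀ bX bY i j m n i₁ j₁ m₁ n₁ i₂ a m₂ n₂ := by
  rw [cellIoU_swap α W₀ H₀ bX bY i j m n i₁ j₁ m₁ n₁ i₂ (-(1:ℝ)/2) m₂ n₂,
      cellIoU_swap α W₀ H₀ bX bY i j m n i₁ j₁ m₁ n₁ i₂ ((1:ℝ)/2) m₂ n₂,
      cellIoU_swap α W₀ H₀ bX bY i j m n i₁ j₁ m₁ n₁ i₂ a m₂ n₂]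
  exact coord_j1 W₀ H₀ bX bY i j m n hα0 hα1 hW₀ hH₀ _ _ _ _ _ _ _ _ ha

theorem coord_m2 {α : ℝ} (W₀ H₀ bX bY : ℝ) (i j m n : ℤ)
    (hα0 : 0 < α) (hα1 : α < 1) (hW₀ : 0 < W₀) (hH₀ : 0 < H₀)
    (i₁ j₁ m₁ n₁ i₂ j₂ a n₂ : ℝ) (ha : a ∈ Set.Icc (-(1:ℝ)/2) (1/2)) :
    min (cellIoU α W₀ H₀ bX bY i j m n i₁ j₁ m₁ n₁ i₂ j₂ (-(1:ℝ)/2) n₂)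
        (cellIoU α W₀ H₀ bX bY i j m n i₁ j₁ m₁ n₁ i₂ j₂ (1/2) n₂)
      ≤ cellIoU α W₀ H₀ bX bY i j m n i₁ j₁ m₁ n₁ i₂ j₂ a n₂ := by
  rw [cellIoU_swap α W₀ H₀ bX bY i j m n i₁ j₁ m₁ n₁ i₂ j₂ (-(1:ℝ)/2) n₂,
      cellIoU_swap α W₀ H₀ bX bY i j m n i₁ j₁ m₁ n₁ i₂ j₂ ((1:ℝ)/2) n₂,
      cellIoU_swap α W₀ H₀ bX bY i j m n i₁ j₁ m₁ n₁ i₂ j₂ a n₂]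
  exact coord_m1 W₀ H₀ bX bY i j m n hα0 hα1 hW₀ hH₀ _ _ _ _ _ _ _ _ ha

theorem coord_n2 {α : ℝ} (W₀ H₀ bX bY : ℝ) (i j m n : ℤ)
    (hα0 : 0 < α) (hα1 : α < 1) (hW₀ : 0 < W₀) (hH₀ : 0 < H₀)
    (i₁ j₁ m₁ n₁ i₂ j₂ m₂ a : ℝ) (ha : a ∈ Set.Icc (-(1:ℝ)/2) (1/2)) :
    min (cellIoU α W₀ H₀ bX bY i j m n i₁ j₁ m₁ n₁ i₂ j₂ m₂ (-(1:ℝ)/2))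
        (cellIoU α W₀ H₀ bX bY i j m n i₁ j₁ m₁ n₁ i₂ j₂ m₂ (1/2))
      ≤ cellIoU α W₀ H₀ bX bY i j m n i₁ j₁ m₁ n₁ i₂ j₂ m₂ a := by
  rw [cellIoU_swap α W₀ H₀ bX bY i j m n i₁ j₁ m₁ n₁ i₂ j₂ m₂ (-(1:ℝ)/2),
      cellIoU_swap α W₀ H₀ bX bY i j m n i₁ j₁ m₁ n₁ i₂ j₂ m₂ ((1:ℝ)/2),
      cellIoU_swap α W₀ H₀ bX bY i j m n i₁ j₁ m₁ n₁ i₂ j₂ m₂ a]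
  exact coord_n1 W₀ H₀ bX bY i j m n hα0 hα1 hW₀ hH₀ _ _ _ _ _ _ _ _ ha

theorem stmt_14 (α : ℝ) (hα : α ∈ Set.Ioo (0 : ℝ) 1)
    (hcond : (1 - α) / (1 + α) < Real.sqrt α)
    (W₀ H₀ bX bY : ℝ) (hW₀ : 0 < W₀) (hH₀ : 0 < H₀) (i j m n : ℤ) :
    ∃ p : Fin 8 → ℝ, (∀ k, p k = -(1:ℝ)/2 ∨ p k = 1/2) ∧
      ∀ q : Fin 8 → ℝ, (∀ k, q k ∈ Set.Icc (-(1:ℝ)/2) (1/2)) →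
        cellIoU α W₀ H₀ bX bY i j m n
            (p 0) (p 1) (p 2) (p 3) (p 4) (p 5) (p 6) (p 7) ≤
          cellIoU α W₀ H₀ bX bY i j m n
            (q 0) (q 1) (q 2) (q 3) (q 4) (q 5) (q 6) (q 7) := by
  obtain ⟨hα0, hα1⟩ := hα
  obtain ⟨c, -, hc⟩ :=
    Finset.exists_min_image
      (Finset.univ : Finset (Bool × Bool × Bool × Bool × Bool × Bool × Bool × Bool))
      (fun c => cellIoU α W₀ H₀ bX bY i j m n (tv c.1) (tv c.2.1) (tv c.2.2.1)
        (tv c.2.2.2.1) (tv c.2.2.2.2.1) (tv c.2.2.2.2.2.1) (tv c.2.2.2.2.2.2.1)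
        (tv c.2.2.2.2.2.2.2))
      ⟨(true, true, true, true, true, true, true, true), Finset.mem_univ _⟩
  refine ⟨![tv c.1, tv c.2.1, tv c.2.2.1, tv c.2.2.2.1, tv c.2.2.2.2.1, tv c.2.2.2.2.2.1,
      tv c.2.2.2.2.2.2.1, tv c.2.2.2.2.2.2.2], ?_, ?_⟩
  · intro k
    fin_cases k <;> exact tv_or _
  · intro q hq
    obtain ⟨c0, h0⟩ := bool_pick
      (fun z => cellIoU α W₀ H₀ bX bY i j m n z (q 1) (q 2) (q 3) (q 4) (q 5) (q 6) (q 7))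
      (coord_i1 W₀ H₀ bX bY i j m n hα0 hα1 hW₀ hH₀ _ _ _ _ _ _ _ _ (hq 0))
    obtain ⟨c1, h1⟩ := bool_pick
      (fun z => cellIoU α W₀ H₀ bX bY i j m n (tv c0) z (q 2) (q 3) (q 4) (q 5) (q 6) (q 7))
      (coord_j1 W₀ H₀ bX bY i j m n hα0 hα1 hW₀ hH₀ _ _ _ _ _ _ _ _ (hq 1))
    obtain ⟨c2, h2⟩ := bool_pick
      (fun z => cellIoU α W₀ H₀ bX bY i j m n (tv c0) (tv c1) z (q 3) (q 4) (q 5) (q 6) (q 7))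
      (coord_m1 W₀ H₀ bX bY i j m n hα0 hα1 hW₀ hH₀ _ _ _ _ _ _ _ _ (hq 2))
    obtain ⟨c3, h3⟩ := bool_pick
      (fun z => cellIoU α W₀ H₀ bX bY i j m n (tv c0) (tv c1) (tv c2) z (q 4) (q 5) (q 6) (q 7))
      (coord_n1 W₀ H₀ bX bY i j m n hα0 hα1 hW₀ hH₀ _ _ _ _ _ _ _ _ (hq 3))
    obtain ⟨c4, h4⟩ := bool_pick
      (fun z => cellIoU α W₀ H₀ bX bY i j m n (tv c0) (tv c1) (tv c2) (tv c3) z (q 5) (q 6) (q 7))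
      (coord_i2 W₀ H₀ bX bY i j m n hα0 hα1 hW₀ hH₀ _ _ _ _ _ _ _ _ (hq 4))
    obtain ⟨c5, h5⟩ := bool_pick
      (fun z => cellIoU α W₀ H₀ bX bY i j m n (tv c0) (tv c1) (tv c2) (tv c3) (tv c4) z (q 6) (q 7))
      (coord_j2 W₀ H₀ bX bY i j m n hα0 hα1 hW₀ hH₀ _ _ _ _ _ _ _ _ (hq 5))
    obtain ⟨c6, h6⟩ := bool_pick
      (fun z => cellIoU α W₀ H₀ bX bY i j m n (tv c0) (tv c1) (tv c2) (tv c3) (tv c4) (tv c5) z (q 7))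
      (coord_m2 W₀ H₀ bX bY i j m n hα0 hα1 hW₀ hH₀ _ _ _ _ _ _ _ _ (hq 6))
    obtain ⟨c7, h7⟩ := bool_pick
      (fun z => cellIoU α W₀ H₀ bX bY i j m n (tv c0) (tv c1) (tv c2) (tv c3) (tv c4) (tv c5) (tv c6) z)
      (coord_n2 W₀ H₀ bX bY i j m n hα0 hα1 hW₀ hH₀ _ _ _ _ _ _ _ _ (hq 7))
    have hmin : cellIoU α W₀ H₀ bX bY i j m n (tv c.1) (tv c.2.1) (tv c.2.2.1)
        (tv c.2.2.2.1) (tv c.2.2.2.2.1) (tv c.2.2.2.2.2.1) (tv c.2.2.2.2.2.2.1)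
        (tv c.2.2.2.2.2.2.2) ≤ cellIoU α W₀ H₀ bX bY i j m n (tv c0) (tv c1) (tv c2)
        (tv c3) (tv c4) (tv c5) (tv c6) (tv c7) :=
      hc (c0, c1, c2, c3, c4, c5, c6, c7) (Finset.mem_univ _)
    calc cellIoU α W₀ H₀ bX bY i j m n (tv c.1) (tv c.2.1) (tv c.2.2.1)
          (tv c.2.2.2.1) (tv c.2.2.2.2.1) (tv c.2.2.2.2.2.1) (tv c.2.2.2.2.2.2.1)
          (tv c.2.2.2.2.2.2.2)
        ≤ cellIoU α W₀ H₀ bX bY i j m n (tv c0) (tv c1) (tv c2) (tv c3) (tv c4) (tv c5)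
          (tv c6) (tv c7) := hmin
      _ ≤ cellIoU α W₀ H₀ bX bY i j m n (tv c0) (tv c1) (tv c2) (tv c3) (tv c4) (tv c5)
          (tv c6) (q 7) := h7
      _ ≤ cellIoU α W₀ H₀ bX bY i j m n (tv c0) (tv c1) (tv c2) (tv c3) (tv c4) (tv c5)
          (q 6) (q 7) := h6
      _ ≤ cellIoU α W₀ H₀ bX bY i j m n (tv c0) (tv c1) (tv c2) (tv c3) (tv c4) (q 5)
          (q 6) (q 7) := h5
      _ ≤ cellIoU α W₀ H₀ bX bY i j m n (tv c0) (tv c1) (tv c2) (tv c3) (q 4) (q 5)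
          (q 6) (q 7) := h4
      _ ≤ cellIoU α W₀ H₀ bX bY i j m n (tv c0) (tv c1) (tv c2) (q 3) (q 4) (q 5)
          (q 6) (q 7) := h3
      _ ≤ cellIoU α W₀ H₀ bX bY i j m n (tv c0) (tv c1) (q 2) (q 3) (q 4) (q 5)
          (q 6) (q 7) := h2
      _ ≤ cellIoU α W₀ H₀ bX bY i j m n (tv c0) (q 1) (q 2) (q 3) (q 4) (q 5)
          (q 6) (q 7) := h1
      _ ≤ cellIoU α W₀ H₀ bX bY i j m n (q 0) (q 1) (q 2) (q 3) (q 4) (q 5)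
          (q 6) (q 7) := h0
end
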